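/- Let F be a field with |F| > 2, n ≥ 3, V an n-dimensional vector space over F, P a 2-dimensional linear subspace of V, and S a linear subspace of End(V) such that every element of S has at most 2 distinct eigenvalues in F. Assume φ⊗x ∈ S for all φ ∈ V* and x ∈ P with φ(x) = 0. Then P is invariant under every element of S. -/

import Mathlib

open Module Submodule

section helpers
variable {F V : Type*} [Field F] [AddCommGroup V] [Module F V]

/-- dual family to a finite linearly independent family -/
lemma dual_family {m : ℕ} {v : Fin m → V} (li : LinearIndependent F v) :
    ∃ f : Fin m → (V →ₗ[F] F), ∀ i j, f i (v j) = if j = i then 1 else 0 := by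
  classical
  have li' := (linearIndepOn_id_range_iff li.injective).mpr li
  let b := Module.Basis.extend li'
  have hmem : ∀ j, v j ∈ li'.extend (Set.subset_univ _) :=
    fun j => (li'.subset_extend _) ⟨j, rfl⟩
  refine ⟨fun i => b.coord ⟨v i, hmem i⟩, fun i j => ?_⟩
  have hb : ∀ j, b ⟨v j, hmem j⟩ = v j := fun j => Basis.extend_apply_self _ _
  have : b.coord ⟨v i, hmem i⟩ (b ⟨v j, hmem j⟩) = if j = i then 1 else 0 := by
    rw [Basis.coord_apply, Basis.repr_self, Finsupp.single_apply]
    by_cases h : j = i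
    · subst h; simp
    · rw [if_neg, if_neg h]
      intro hc
      exact h (li.injective (Subtype.mk_eq_mk.mp hc))
  rw [← this, hb]

lemma mem_span_triple' {x y z v : V} (h : v ∈ span F {x, y, z}) :
    ∃ a b c : F, v = a • x + b • y + c • z := by
  rw [show ({x, y, z} : Set V) = insert x {y, z} from rfl, Submodule.mem_span_insert] at h
  obtain ⟨a, w, hw, rfl⟩ := h
  rw [Submodule.mem_span_pair] at hw
  obtain ⟨b, c, rfl⟩ := hw
  exact ⟨a, b, c, by rw [add_assoc]⟩

lemma exists_notin [FiniteDimensional F V] (K' Q : Submodule F V)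
    (h2 : 2 ≤ finrank F K') (hle : finrank F (K' ⊓ Q : Submodule F V) ≤ 1) :
    ∃ a ∈ K', a ∉ Q := by
  by_contra hcon
  push_neg at hcon
  have h3 : K' ⊓ Q = K' := inf_eq_left.mpr hcon
  rw [h3] at hle
  omega

lemma exists_two_ne (F : Type*) [Field F] (hF : 2 < Cardinal.mk F) (σ : F) :
    ∃ a b : F, a ≠ b ∧ a ≠ σ ∧ b ≠ σ := by
  classical
  by_contra hcon
  push_neg at hcon
  -- hcon : ∀ a b, a ≠ b → a ≠ σ → b = σ
  have hinj : Function.Injective (fun c : F => if c = σ then (ULift.up (0 : Fin 2)) else ULift.up 1) := by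
    intro a b hab
    by_cases ha : a = σ <;> by_cases hb : b = σ
    · rw [ha, hb]
    · simp only [ha, hb, if_true, if_false, if_neg, if_pos, ULift.up_inj] at hab
      exact absurd hab (by norm_num)
    · simp only [ha, hb, if_true, if_false, if_neg, if_pos, ULift.up_inj] at hab
      exact absurd hab (by norm_num)
    · by_contra hne
      exact hb (hcon a b hne ha)
  have h5 := Cardinal.mk_le_of_injective hinj
  simp only [Cardinal.mk_uLift, Cardinal.mk_fin, Nat.cast_ofNat, Cardinal.lift_ofNat] at h5
  exact absurd (lt_of_lt_of_le hF h5) (by norm_num)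


lemma memS (P : Submodule F V) (S : Submodule F (V →ₗ[F] V))
    (hall : ∀ (φ : V →ₗ[F] F), ∀ x ∈ P, φ x = 0 → φ.smulRight x ∈ S)
    {p₀ p₁ : V} (h0 : p₀ ∈ P) (h1 : p₁ ∈ P)
    {ξ η : V →ₗ[F] F} (hξ0 : ξ p₀ = 1) (hξ1 : ξ p₁ = 0) (hη0 : η p₀ = 0) (hη1 : η p₁ = 1)
    (φ ψ : V →ₗ[F] F) (hc : φ p₀ + ψ p₁ = 0) :
    φ.smulRight p₀ + ψ.smulRight p₁ ∈ S := by
  set c := φ p₀ with hcdef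
  have key : φ.smulRight p₀ + ψ.smulRight p₁ =
      ((φ - c • ξ).smulRight p₀ + (ψ + c • η).smulRight p₁) +
      (c • ((ξ - η).smulRight (p₀ + p₁)) + (c • (η.smulRight p₀) + (-c) • (ξ.smulRight p₁))) := by
    ext w
    simp only [LinearMap.add_apply, LinearMap.smulRight_apply, LinearMap.smul_apply,
      LinearMap.sub_apply, smul_eq_mul]
    module
  rw [key]
  have h1' : (φ - c • ξ) p₀ = 0 := by
    simp [hξ0, hcdef]
  have h2' : (ψ + c • η) p₁ = 0 := by
    simp only [LinearMap.add_apply, LinearMap.smul_apply, hη1, smul_eq_mul, mul_one]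
    rw [eq_neg_of_add_eq_zero_right hc]; ring
  have h3' : (ξ - η) (p₀ + p₁) = 0 := by
    simp [map_add, hξ0, hξ1, hη0, hη1]
  exact add_mem
    (add_mem (hall _ _ h0 h1') (hall _ _ h1 h2'))
    (add_mem (smul_mem _ _ (hall _ _ (add_mem h0 h1) h3'))
      (add_mem (smul_mem _ _ (hall _ _ h0 hη0)) (smul_mem _ _ (hall _ _ h1 hξ1))))


lemma no_three (S : Submodule F (V →ₗ[F] V))
    (hspec : ∀ u ∈ S, ∃ a b : F, ∀ c : F, Module.End.HasEigenvalue u c → c = a ∨ c = b)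
    {v : V →ₗ[F] V} (hv : v ∈ S) {a₁ a₂ a₃ : V} {l₁ l₂ l₃ : F}
    (h₁ : a₁ ≠ 0) (h₂ : a₂ ≠ 0) (h₃ : a₃ ≠ 0)
    (e₁ : v a₁ = l₁ • a₁) (e₂ : v a₂ = l₂ • a₂) (e₃ : v a₃ = l₃ • a₃)
    (d₁₂ : l₁ ≠ l₂) (d₁₃ : l₁ ≠ l₃) (d₂₃ : l₂ ≠ l₃) : False := by
  obtain ⟨a, b, hab⟩ := hspec v hv
  have E : ∀ (l : F) (x : V), x ≠ 0 → v x = l • x → l = a ∨ l = b := by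
    intro l x hx he
    exact hab l (Module.End.hasEigenvalue_of_hasEigenvector
      ⟨Module.End.mem_eigenspace_iff.mpr he, hx⟩)
  rcases E l₁ a₁ h₁ e₁ with h | h <;> rcases E l₂ a₂ h₂ e₂ with g | g <;>
    rcases E l₃ a₃ h₃ e₃ with k | k <;> simp_all


lemma case1 (P : Submodule F V) (S : Submodule F (V →ₗ[F] V))
    (hall : ∀ (φ : V →ₗ[F] F), ∀ x ∈ P, φ x = 0 → φ.smulRight x ∈ S)
    (hspec : ∀ u ∈ S, ∃ a b : F, ∀ c : F, Module.End.HasEigenvalue u c → c = a ∨ c = b)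
    (u : V →ₗ[F] V) (hu : u ∈ S) (x y : V) (hx : x ∈ P) (hy : y ∈ P)
    (hz : u x ∉ P)
    (f : Fin 3 → (V →ₗ[F] F)) (hf : ∀ i j, f i (![x, y, u x] j) = if j = i then 1 else 0)
    (t1 t2 t3 w1 w2 w3 : F)
    (ht : u y = t1 • x + t2 • y + t3 • (u x))
    (hw : u (u x) = w1 • x + w2 • y + w3 • (u x))
    (h2 : (1 : F) + 1 = 0)
    (l1 l2 : F) (hl12 : l1 ≠ l2) (hl1 : l1 ≠ t2 + w3) (hl2 : l2 ≠ t2 + w3) : False := by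
  set z := u x with hzdef
  -- f values
  have f00 : f 0 x = 1 := by simpa using hf 0 0
  have f01 : f 0 y = 0 := by simpa using hf 0 1
  have f02 : f 0 z = 0 := by simpa using hf 0 2
  have f10 : f 1 x = 0 := by simpa using hf 1 0
  have f11 : f 1 y = 1 := by simpa using hf 1 1
  have f12 : f 1 z = 0 := by simpa using hf 1 2
  have f20 : f 2 x = 0 := by simpa using hf 2 0
  have f21 : f 2 y = 0 := by simpa using hf 2 1
  have f22 : f 2 z = 1 := by simpa using hf 2 2
  set l3 := (t2 + w3) - l1 - l2 with hl3
  have d13 : l1 ≠ l3 := by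
    intro h; apply hl2; linear_combination h - l1 * h2
  have d23 : l2 ≠ l3 := by
    intro h; apply hl1; linear_combination h - l2 * h2
  set p1 := l1 - w3 with hp1
  set p2 := l2 - w3 with hp2
  set p3 := l3 - w3 - t3 with hp3
  set a1 := p1 • x + z with ha1
  set a2 := p2 • x + z with ha2
  set a3 := p3 • x + y + z with ha3
  have ha10 : a1 ≠ 0 := by
    intro h; apply hz
    have : z = (-p1) • x + (0:F) • y := by linear_combination (norm := module) h
    rw [hzdef] at this ⊢
    rw [this]; exact add_mem (smul_mem _ _ hx) (smul_mem _ _ hy)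
  have ha20 : a2 ≠ 0 := by
    intro h; apply hz
    have : z = (-p2) • x + (0:F) • y := by linear_combination (norm := module) h
    rw [hzdef] at this ⊢
    rw [this]; exact add_mem (smul_mem _ _ hx) (smul_mem _ _ hy)
  have ha30 : a3 ≠ 0 := by
    intro h; apply hz
    have : z = (-p3) • x + (-1:F) • y := by linear_combination (norm := module) h
    rw [hzdef] at this ⊢
    rw [this]; exact add_mem (smul_mem _ _ hx) (smul_mem _ _ hy)
  set A := l1 + l2 - w3 with hA
  set C := -(p1 * p2) - w1 with hC
  set α3 := l3 * p3 - t1 - w1 with hα3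
  set B := α3 - A * p3 - C with hB
  set B' := l3 - t2 with hB'
  set C' := -w2 with hC'
  set φ : V →ₗ[F] F := A • f 0 + B • f 1 + C • f 2 with hφ
  set ψ : V →ₗ[F] F := B' • f 1 + C' • f 2 with hψ
  have hφx : φ x = A := by simp [hφ, f00, f10, f20]
  have hψy : ψ y = B' := by simp [hψ, f11, f21]
  have hconstraint : φ x + ψ y = 0 := by
    rw [hφx, hψy, hA, hB', hl3]; ring
  have hmem := memS P S hall hx hy f00 f01 f10 f11 φ ψ hconstraint
  set r := φ.smulRight x + ψ.smulRight y with hr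
  set v := u + r with hv
  have hvS : v ∈ S := S.add_mem hu hmem
  -- values of φ ψ on a's
  have hφ1 : φ a1 = A * p1 + C := by
    simp [hφ, ha1, map_add, map_smul, f00, f10, f20, f02, f12, f22]; ring
  have hφ2 : φ a2 = A * p2 + C := by
    simp [hφ, ha2, map_add, map_smul, f00, f10, f20, f02, f12, f22]; ring
  have hφ3 : φ a3 = A * p3 + B + C := by
    simp [hφ, ha3, map_add, map_smul, f00, f01, f10, f11, f20, f21, f02, f12, f22]; ring
  have hψ1 : ψ a1 = C' := by
    simp [hψ, ha1, map_add, map_smul, f10, f11, f12, f21, f22, f20]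
  have hψ2 : ψ a2 = C' := by
    simp [hψ, ha2, map_add, map_smul, f10, f11, f12, f21, f22, f20]
  have hψ3 : ψ a3 = B' + C' := by
    simp [hψ, ha3, map_add, map_smul, f10, f11, f12, f21, f22, f20]
  -- eigen equations
  have hva1 : v a1 = l1 • a1 := by
    have hua1 : u a1 = p1 • z + (w1 • x + w2 • y + w3 • z) := by
      rw [ha1, map_add, map_smul, ← hzdef, ← hw]
    have : v a1 = u a1 + (φ a1) • x + (ψ a1) • y := by
      rw [hv]; simp [hr, LinearMap.add_apply, LinearMap.smulRight_apply]; module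
    rw [this, hua1, hφ1, hψ1, ha1]
    match_scalars <;> simp only [hp1, hp2, hp3, hA, hB, hB', hC, hC', hα3, hl3] <;> ring
  have hva2 : v a2 = l2 • a2 := by
    have hua2 : u a2 = p2 • z + (w1 • x + w2 • y + w3 • z) := by
      rw [ha2, map_add, map_smul, ← hzdef, ← hw]
    have : v a2 = u a2 + (φ a2) • x + (ψ a2) • y := by
      rw [hv]; simp [hr, LinearMap.add_apply, LinearMap.smulRight_apply]; module
    rw [this, hua2, hφ2, hψ2, ha2]
    match_scalars <;> simp only [hp1, hp2, hp3, hA, hB, hB', hC, hC', hα3, hl3] <;> ring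
  have hva3 : v a3 = l3 • a3 := by
    have hua3 : u a3 = p3 • z + (t1 • x + t2 • y + t3 • z) + (w1 • x + w2 • y + w3 • z) := by
      rw [ha3, map_add, map_add, map_smul, ← hzdef, ← ht, ← hw]
    have : v a3 = u a3 + (φ a3) • x + (ψ a3) • y := by
      rw [hv]; simp [hr, LinearMap.add_apply, LinearMap.smulRight_apply]; module
    rw [this, hua3, hφ3, hψ3, ha3]
    match_scalars <;> simp only [hp1, hp2, hp3, hA, hB, hB', hC, hC', hα3, hl3] <;> ring
  exact no_three S hspec hvS ha10 ha20 ha30 hva1 hva2 hva3 hl12 d13 d23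


lemma case2tail (P : Submodule F V) (S : Submodule F (V →ₗ[F] V))
    (hall : ∀ (φ : V →ₗ[F] F), ∀ x ∈ P, φ x = 0 → φ.smulRight x ∈ S)
    (hspec : ∀ u ∈ S, ∃ a b : F, ∀ c : F, Module.End.HasEigenvalue u c → c = a ∨ c = b)
    (u : V →ₗ[F] V) (hu : u ∈ S) (a₁ a₂ a₃ : V) (l3 : F)
    (hl30 : l3 ≠ 0) (hl31 : l3 ≠ 1)
    (hu1 : u a₁ ∈ P) (hu2 : u a₂ - a₂ ∈ P) (hu3 : u a₃ - l3 • a₃ ∈ P)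
    (ha1P : a₁ ∉ P) (ha2P : a₂ ∉ P) (ha30 : a₃ ≠ 0)
    (p₀ p₁ : V) (hp₀ : p₀ ∈ P) (hp₁ : p₁ ∈ P) (hPspan : P ≤ span F {p₀, p₁})
    (li4 : LinearIndependent F ![a₁, a₂, a₃, p₁])
    (lipair : LinearIndependent F ![p₀, p₁]) : False := by
  obtain ⟨g, hg⟩ := dual_family li4
  obtain ⟨fp, hfp⟩ := dual_family lipair
  have g00 : g 0 a₁ = 1 := by simpa using hg 0 0
  have g01 : g 0 a₂ = 0 := by simpa using hg 0 1
  have g02 : g 0 a₃ = 0 := by simpa using hg 0 2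
  have g03 : g 0 p₁ = 0 := by simpa using hg 0 3
  have g10 : g 1 a₁ = 0 := by simpa using hg 1 0
  have g11 : g 1 a₂ = 1 := by simpa using hg 1 1
  have g12 : g 1 a₃ = 0 := by simpa using hg 1 2
  have g13 : g 1 p₁ = 0 := by simpa using hg 1 3
  have g20 : g 2 a₁ = 0 := by simpa using hg 2 0
  have g21 : g 2 a₂ = 0 := by simpa using hg 2 1
  have g22 : g 2 a₃ = 1 := by simpa using hg 2 2
  have g23 : g 2 p₁ = 0 := by simpa using hg 2 3
  have g30 : g 3 a₁ = 0 := by simpa using hg 3 0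
  have g31 : g 3 a₂ = 0 := by simpa using hg 3 1
  have g32 : g 3 a₃ = 0 := by simpa using hg 3 2
  have g33 : g 3 p₁ = 1 := by simpa using hg 3 3
  have fp00 : fp 0 p₀ = 1 := by simpa using hfp 0 0
  have fp01 : fp 0 p₁ = 0 := by simpa using hfp 0 1
  have fp10 : fp 1 p₀ = 0 := by simpa using hfp 1 0
  have fp11 : fp 1 p₁ = 1 := by simpa using hfp 1 1
  -- coordinates
  obtain ⟨α₁, β₁, hαβ₁⟩ := mem_span_pair.mp (hPspan (neg_mem hu1))
  obtain ⟨α₂, β₂, hαβ₂⟩ := mem_span_pair.mp (hPspan (neg_mem hu2))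
  obtain ⟨α₃, β₃, hαβ₃⟩ := mem_span_pair.mp (hPspan (neg_mem hu3))
  set φ : V →ₗ[F] F := α₁ • g 0 + α₂ • g 1 + α₃ • g 2 with hφ
  set ψ : V →ₗ[F] F := β₁ • g 0 + β₂ • g 1 + β₃ • g 2 + (-(φ p₀)) • g 3 with hψ
  have hφ1 : φ a₁ = α₁ := by simp [hφ, g00, g10, g20]
  have hφ2 : φ a₂ = α₂ := by simp [hφ, g01, g11, g21]
  have hφ3 : φ a₃ = α₃ := by simp [hφ, g02, g12, g22]
  have hψ1 : ψ a₁ = β₁ := by simp [hψ, g00, g10, g20, g30]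
  have hψ2 : ψ a₂ = β₂ := by simp [hψ, g01, g11, g21, g31]
  have hψ3 : ψ a₃ = β₃ := by simp [hψ, g02, g12, g22, g32]
  have hψp₁ : ψ p₁ = -(φ p₀) := by simp [hψ, g03, g13, g23, g33]
  have hconstraint : φ p₀ + ψ p₁ = 0 := by rw [hψp₁]; ring
  have hmem := memS P S hall hp₀ hp₁ fp00 fp01 fp10 fp11 φ ψ hconstraint
  set v := u + (φ.smulRight p₀ + ψ.smulRight p₁) with hv
  have hvS : v ∈ S := S.add_mem hu hmem
  have key : ∀ (a : V) (l α β : F), φ a = α → ψ a = β →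
      α • p₀ + β • p₁ = -(u a) + l • a → v a = l • a := by
    intro a l α β hα hβ hαβ
    rw [hv]
    simp only [LinearMap.add_apply, LinearMap.smulRight_apply, hα, hβ]
    rw [hαβ]
    abel
  have hva1 : v a₁ = (0:F) • a₁ := by
    apply key a₁ 0 α₁ β₁ hφ1 hψ1
    linear_combination (norm := module) hαβ₁
  have hva2 : v a₂ = (1:F) • a₂ := by
    apply key a₂ 1 α₂ β₂ hφ2 hψ2
    linear_combination (norm := module) hαβ₂
  have hva3 : v a₃ = l3 • a₃ := by
    apply key a₃ l3 α₃ β₃ hφ3 hψ3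
    linear_combination (norm := module) hαβ₃
  have ha10 : a₁ ≠ 0 := fun h => ha1P (h ▸ P.zero_mem)
  have ha20 : a₂ ≠ 0 := fun h => ha2P (h ▸ P.zero_mem)
  exact no_three S hspec hvS ha10 ha20 ha30 hva1 hva2 hva3
    (by exact zero_ne_one) (Ne.symm hl30) (fun h => hl31 h.symm)


end helpers

/-- Splitting Lemma for Hurdles, dual version: let V be n-dimensional with n ≥ 3 over a
field with more than 2 elements, P a 2-dimensional subspace of V, and S ⊆ End(V) a
subspace all of whose elements have at most 2 distinct eigenvalues in F. If S contains
φ ⊗ x for every linear form φ and every x ∈ P with φ(x) = 0, then P is invariant under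
every element of S. -/
theorem stmt14 {F V : Type*} [Field F] [AddCommGroup V] [Module F V]
    [FiniteDimensional F V] {n : ℕ} (hn : 3 ≤ n) (hV : Module.finrank F V = n)
    (hF : 2 < Cardinal.mk F)
    (P : Submodule F V) (hP : Module.finrank F P = 2)
    (S : Submodule F (V →ₗ[F] V))
    (hspec : ∀ u ∈ S, ∃ a b : F, ∀ c : F, Module.End.HasEigenvalue u c → c = a ∨ c = b)
    (hall : ∀ (φ : V →ₗ[F] F), ∀ x ∈ P, φ x = 0 → φ.smulRight x ∈ S) :
    ∀ u ∈ S, ∀ x ∈ P, u x ∈ P := by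
  intro u hu x hx
  by_contra hz
  have hx0 : x ≠ 0 := by
    rintro rfl
    exact hz (by rw [map_zero]; exact P.zero_mem)
  have hnotle : ¬ P ≤ span F {x} := by
    intro hle
    have h2 := Submodule.finrank_mono hle
    rw [hP, finrank_span_singleton hx0] at h2
    omega
  obtain ⟨y, hyP, hyx⟩ : ∃ y ∈ P, y ∉ span F {x} := by
    by_contra hcon; push_neg at hcon; exact hnotle hcon
  have hy0 : y ≠ 0 := fun h => hyx (h ▸ Submodule.zero_mem _)
  have lixy : LinearIndependent F ![x, y] := by
    rw [LinearIndependent.pair_iff]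
    intro s t hst
    rcases eq_or_ne t 0 with rfl | ht
    · refine ⟨?_, rfl⟩
      rw [zero_smul, add_zero, smul_eq_zero] at hst
      exact hst.resolve_right hx0
    · exfalso
      apply hyx
      rw [Submodule.mem_span_singleton]
      refine ⟨t⁻¹ * -s, ?_⟩
      have h' : t • y = -s • x := by linear_combination (norm := module) hst
      rw [mul_smul, ← h', smul_smul, inv_mul_cancel₀ ht, one_smul]
  have hrangexy : Set.range ![x, y] = {x, y} := by
    simp [Matrix.range_cons]
    rw [Set.pair_comm]
  have hspanxy : span F {x, y} = P := by
    apply Submodule.eq_of_le_of_finrank_le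
    · rw [span_le]; rintro v (rfl | rfl)
      exacts [hx, hyP]
    · rw [hP, ← hrangexy, finrank_span_eq_card lixy]
      simp
  have hz0 : u x ≠ 0 := fun h => hz (h ▸ P.zero_mem)
  have hzxy : u x ∉ span F {x, y} := by rw [hspanxy]; exact hz
  have lixyz : LinearIndependent F ![x, y, u x] := by
    rw [Fintype.linearIndependent_iff]
    intro g hg
    rw [Fin.sum_univ_three] at hg
    simp only [Matrix.cons_val_zero, Matrix.cons_val_one, Matrix.head_cons,
      Matrix.cons_val_two, Matrix.tail_cons] at hg
    have hg2 : g 2 = 0 := by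
      by_contra hg2
      apply hzxy
      rw [mem_span_pair]
      refine ⟨(g 2)⁻¹ * -(g 0), (g 2)⁻¹ * -(g 1), ?_⟩
      have h' : (g 2) • (u x) = -(g 0) • x + -(g 1) • y := by
        linear_combination (norm := module) hg
      have h'' : u x = (g 2)⁻¹ • ((g 2) • u x) := by
        rw [smul_smul, inv_mul_cancel₀ hg2, one_smul]
      rw [mul_smul, mul_smul, h'', h', smul_add, smul_smul, smul_smul, mul_smul, mul_smul]
    rw [hg2, zero_smul, add_zero] at hg
    have hp := LinearIndependent.pair_iff.mp lixy (g 0) (g 1) hg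
    intro i; fin_cases i
    · exact hp.1
    · exact hp.2
    · exact hg2
  obtain ⟨f, hf⟩ := dual_family lixyz
  have f00 : f 0 x = 1 := by simpa using hf 0 0
  have f01 : f 0 y = 0 := by simpa using hf 0 1
  have f10 : f 1 x = 0 := by simpa using hf 1 0
  have f11 : f 1 y = 1 := by simpa using hf 1 1
  have f02 : f 0 (u x) = 0 := by simpa using hf 0 2
  have f12 : f 1 (u x) = 0 := by simpa using hf 1 2
  by_cases h2 : (1 : F) + 1 = 0
  · -- characteristic 2
    have hPM : P ≤ span F {x, y, u x} := by
      rw [← hspanxy]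
      apply span_mono
      intro v hv
      rcases hv with rfl | rfl
      · exact Or.inl rfl
      · exact Or.inr (Or.inl rfl)
    have hxM : x ∈ span F {x, y, u x} := subset_span (Or.inl rfl)
    have hyM : y ∈ span F {x, y, u x} := subset_span (Or.inr (Or.inl rfl))
    have hzM : u x ∈ span F {x, y, u x} := subset_span (Or.inr (Or.inr rfl))
    by_cases hMcase : u y ∈ span F {x, y, u x} ∧ u (u x) ∈ span F {x, y, u x}
    · -- CASE 1
      obtain ⟨t1, t2, t3, ht⟩ := mem_span_triple' hMcase.1
      obtain ⟨w1, w2, w3, hw⟩ := mem_span_triple' hMcase.2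
      obtain ⟨l1, l2, hl12, hl1, hl2⟩ := exists_two_ne F hF (t2 + w3)
      exact case1 P S hall hspec u hu x y hx hyP hz f hf t1 t2 t3 w1 w2 w3 ht hw h2 l1 l2 hl12 hl1 hl2
    · -- CASE 2
      obtain ⟨l3, hl30, hl31⟩ : ∃ c : F, c ≠ 0 ∧ c ≠ 1 := by
        obtain ⟨a, b, hab, ha1, hb1⟩ := exists_two_ne F hF 1
        rcases eq_or_ne a 0 with rfl | ha0
        · exact ⟨b, fun h => hab h.symm, hb1⟩
        · exact ⟨a, ha0, ha1⟩
      have hKmem : ∀ (l : F) (a : V),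
          a ∈ LinearMap.ker (P.mkQ ∘ₗ (u - l • LinearMap.id)) ↔ u a - l • a ∈ P := by
        intro l a
        rw [LinearMap.mem_ker, LinearMap.comp_apply, LinearMap.sub_apply, LinearMap.smul_apply,
          LinearMap.id_apply, Submodule.mkQ_apply, Submodule.Quotient.mk_eq_zero]
      have hKrank : ∀ l : F,
          2 ≤ finrank F (LinearMap.ker (P.mkQ ∘ₗ (u - l • LinearMap.id))) := by
        intro l
        have h1' := LinearMap.finrank_range_add_finrank_ker (P.mkQ ∘ₗ (u - l • LinearMap.id))
        have h2' : finrank F (LinearMap.range (P.mkQ ∘ₗ (u - l • LinearMap.id))) ≤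
            finrank F (V ⧸ P) := (LinearMap.range _).finrank_le
        have h3' := P.finrank_quotient_add_finrank
        rw [hV] at h1' h3'
        rw [hP] at h3'
        omega
      have big : ∃ a₁ a₂ : V, u a₁ ∈ P ∧ u a₂ - a₂ ∈ P ∧ a₁ ∉ P ∧ a₂ ∉ P ∧
          (∀ c d : F, c • a₁ + d • a₂ ∈ P → c = 0 ∧ d = 0) := by
        by_cases hty : u y ∈ span F {x, y, u x}
        · -- 2b : u (u x) ∉ M
          have htz : u (u x) ∉ span F {x, y, u x} := fun h => hMcase ⟨hty, h⟩
          obtain ⟨t1, t2, t3, ht⟩ := mem_span_triple' hty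
          have hkP : y - t3 • x ∈ P := sub_mem hyP (P.smul_mem _ hx)
          have hk0 : y - t3 • x ≠ 0 := by
            intro h
            apply hyx
            rw [Submodule.mem_span_singleton]
            exact ⟨t3, by linear_combination (norm := module) -h⟩
          have hKlP : ∀ (l : F) (a : V), u a - l • a ∈ P → a ∈ P →
              ∃ d : F, a = d • (y - t3 • x) := by
            intro l a hKa haP
            have haxy : a ∈ span F {x, y} := by rw [hspanxy]; exact haP
            obtain ⟨c, d, hcd⟩ := mem_span_pair.mp haxy
            have huaP : u a ∈ P := by
              have h4 : u a = (u a - l • a) + l • a := by abel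
              rw [h4]; exact add_mem hKa (P.smul_mem _ haP)
            have hua : u a = c • (u x) + d • (t1 • x + t2 • y + t3 • (u x)) := by
              rw [← hcd, map_add, map_smul, map_smul, ht]
            have hzc : (c + d * t3) • (u x) = u a - (d * t1) • x - (d * t2) • y := by
              rw [hua]; module
            have hc3 : c + d * t3 = 0 := by
              by_contra hne
              apply hz
              have h5 : u x = (c + d * t3)⁻¹ • ((c + d * t3) • (u x)) := by
                rw [smul_smul, inv_mul_cancel₀ hne, one_smul]
              rw [h5, hzc]
              exact P.smul_mem _ (sub_mem (sub_mem huaP (P.smul_mem _ hx)) (P.smul_mem _ hyP))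
            refine ⟨d, ?_⟩
            rw [← hcd]
            have h6 : c = -(d * t3) := by linear_combination hc3
            rw [h6]; module
          have MK : ∀ (l : F) (a : V), a ∈ span F {x, y, u x} → u a - l • a ∈ P → a ∈ P := by
            intro l a haM hPmem
            obtain ⟨c1, c2, c3, hc⟩ := mem_span_triple' haM
            have hua : u a = c1 • (u x) + c2 • (u y) + c3 • (u (u x)) := by
              rw [hc, map_add, map_add, map_smul, map_smul, map_smul]
            have hc3 : c3 = 0 := by
              by_contra hne
              apply htz
              have e : u a - c1 • (u x) - c2 • (u y) = c3 • (u (u x)) := by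
                rw [hua]; module
              have h5 : u (u x) = c3⁻¹ • (u a - c1 • (u x) - c2 • (u y)) := by
                rw [e, smul_smul, inv_mul_cancel₀ hne, one_smul]
              rw [h5]
              apply Submodule.smul_mem
              have huaM : u a ∈ span F {x, y, u x} := by
                have h6 : u a = (u a - l • a) + l • a := by abel
                rw [h6]
                exact add_mem (hPM hPmem) (Submodule.smul_mem _ _ haM)
              exact sub_mem (sub_mem huaM (Submodule.smul_mem _ _ hzM))
                (Submodule.smul_mem _ _ hty)
            rw [hc, hc3, zero_smul, add_zero]
            exact add_mem (P.smul_mem _ hx) (P.smul_mem _ hyP)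
          have hgetout : ∀ l : F, ∃ a, (u a - l • a ∈ P) ∧ a ∉ P := by
            intro l
            have hle : LinearMap.ker (P.mkQ ∘ₗ (u - l • LinearMap.id)) ⊓ P ≤
                span F {y - t3 • x} := by
              rintro a ⟨ha1, ha2⟩
              obtain ⟨d, hd⟩ := hKlP l a ((hKmem l a).mp ha1) ha2
              rw [Submodule.mem_span_singleton]
              exact ⟨d, hd.symm⟩
            have hfr : finrank F
                (LinearMap.ker (P.mkQ ∘ₗ (u - l • LinearMap.id)) ⊓ P : Submodule F V) ≤ 1 := by
              calc finrank F _ ≤ finrank F (span F {y - t3 • x}) := Submodule.finrank_mono hle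
                _ ≤ 1 := by rw [finrank_span_singleton hk0]
            obtain ⟨a, haK, haP⟩ := exists_notin
              (LinearMap.ker (P.mkQ ∘ₗ (u - l • LinearMap.id))) P (hKrank l) hfr
            exact ⟨a, (hKmem l a).mp haK, haP⟩
          obtain ⟨a₁, hu1', ha₁P⟩ := hgetout 0
          obtain ⟨a₂, hu2', ha₂P⟩ := hgetout 1
          have hu1 : u a₁ ∈ P := by simpa using hu1'
          have hu2 : u a₂ - a₂ ∈ P := by simpa using hu2'
          refine ⟨a₁, a₂, hu1, hu2, ha₁P, ha₂P, ?_⟩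
          intro c d hcd
          by_cases hd : d = 0
          · subst hd
            rw [zero_smul, add_zero] at hcd
            refine ⟨?_, rfl⟩
            by_contra hc
            apply ha₁P
            have h5 : a₁ = c⁻¹ • (c • a₁) := by rw [smul_smul, inv_mul_cancel₀ hc, one_smul]
            rw [h5]; exact P.smul_mem _ hcd
          · exfalso
            apply ha₂P
            apply MK 1 a₂ ?_ (by simpa using hu2)
            have haxy : c • a₁ + d • a₂ ∈ span F {x, y} := by rw [hspanxy]; exact hcd
            obtain ⟨e1, e2, he⟩ := mem_span_pair.mp haxy
            have hupM : u (c • a₁ + d • a₂) ∈ span F {x, y, u x} := by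
              rw [← he, map_add, map_smul, map_smul]
              exact add_mem (Submodule.smul_mem _ _ hzM) (Submodule.smul_mem _ _ hty)
            have hda2 : d • a₂ = u (c • a₁ + d • a₂) - c • (u a₁) - d • (u a₂ - a₂) := by
              rw [map_add, map_smul, map_smul]; module
            have hda2M : d • a₂ ∈ span F {x, y, u x} := by
              rw [hda2]
              exact sub_mem (sub_mem hupM (Submodule.smul_mem _ _ (hPM hu1)))
                (Submodule.smul_mem _ _ (hPM hu2))
            have h5 : a₂ = d⁻¹ • (d • a₂) := by rw [smul_smul, inv_mul_cancel₀ hd, one_smul]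
            rw [h5]
            exact Submodule.smul_mem _ _ hda2M
        · -- 2a : u y ∉ M
          have KP0 : ∀ a ∈ P, u a ∈ P → a = 0 := by
            intro a haP huaP
            have haxy : a ∈ span F {x, y} := by rw [hspanxy]; exact haP
            obtain ⟨c, d, hcd⟩ := mem_span_pair.mp haxy
            have hua : u a = c • (u x) + d • (u y) := by
              rw [← hcd, map_add, map_smul, map_smul]
            have hd : d = 0 := by
              by_contra hd
              apply hty
              have e : u a - c • (u x) = d • u y := by rw [hua]; module
              have h5 : u y = d⁻¹ • (u a - c • (u x)) := by
                rw [e, smul_smul, inv_mul_cancel₀ hd, one_smul]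
              rw [h5]
              exact Submodule.smul_mem _ _ (sub_mem (hPM huaP) (Submodule.smul_mem _ _ hzM))
            have hcc : c = 0 := by
              by_contra hcc
              apply hz
              have e : u a = c • u x := by rw [hua, hd]; module
              have h5 : u x = c⁻¹ • (u a) := by
                rw [e, smul_smul, inv_mul_cancel₀ hcc, one_smul]
              rw [h5]
              exact P.smul_mem _ huaP
            rw [← hcd, hcc, hd, zero_smul, zero_smul, add_zero]
          have hKlP' : ∀ (l : F) (a : V), (u a - l • a ∈ P) → a ∈ P → a = 0 := by
            intro l a hKa haP
            apply KP0 a haP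
            have h4 : u a = (u a - l • a) + l • a := by abel
            rw [h4]; exact add_mem hKa (P.smul_mem _ haP)
          have hbot : ∀ l : F,
              (LinearMap.ker (P.mkQ ∘ₗ (u - l • LinearMap.id)) ⊓ P) = ⊥ := by
            intro l
            rw [Submodule.eq_bot_iff]
            rintro a ⟨ha1, ha2⟩
            exact hKlP' l a ((hKmem l a).mp ha1) ha2
          obtain ⟨a₂, ha₂K, ha₂P⟩ := exists_notin
            (LinearMap.ker (P.mkQ ∘ₗ (u - (1:F) • LinearMap.id))) P (hKrank 1)
            (by rw [hbot 1]; simp)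
          have hu2 : u a₂ - a₂ ∈ P := by simpa using (hKmem 1 a₂).mp ha₂K
          have ha₂0 : a₂ ≠ 0 := fun h => ha₂P (h ▸ P.zero_mem)
          obtain ⟨a₁, ha₁K, ha₁Q⟩ : ∃ a₁ ∈ LinearMap.ker (P.mkQ ∘ₗ (u - (0:F) • LinearMap.id)),
              a₁ ∉ P ⊔ span F {a₂} := by
            by_contra hcon
            push_neg at hcon
            have hle : LinearMap.ker (P.mkQ ∘ₗ (u - (0:F) • LinearMap.id)) ≤
                P ⊔ span F {a₂} := hcon
            have h4 := Submodule.finrank_sup_add_finrank_inf_eq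
              (LinearMap.ker (P.mkQ ∘ₗ (u - (0:F) • LinearMap.id))) P
            rw [hbot 0, finrank_bot, hP] at h4
            have h5 : LinearMap.ker (P.mkQ ∘ₗ (u - (0:F) • LinearMap.id)) ⊔ P ≤
                P ⊔ span F {a₂} := sup_le hle le_sup_left
            have h6 := Submodule.finrank_sup_add_finrank_inf_eq P (span F {a₂})
            have h7 : finrank F (span F {a₂}) = 1 := finrank_span_singleton ha₂0
            have h8 := Submodule.finrank_mono h5
            have h9 := hKrank 0
            rw [hP, h7] at h6
            omega
          have hu1 : u a₁ ∈ P := by simpa using (hKmem 0 a₁).mp ha₁K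
          have ha₁P : a₁ ∉ P := fun h => ha₁Q (Submodule.mem_sup_left h)
          refine ⟨a₁, a₂, hu1, hu2, ha₁P, ha₂P, ?_⟩
          intro c d hcd
          have hc : c = 0 := by
            by_contra hc
            apply ha₁Q
            have e : (c • a₁ + d • a₂) - d • a₂ = c • a₁ := by abel
            have h5 : a₁ = c⁻¹ • ((c • a₁ + d • a₂) - d • a₂) := by
              rw [e, smul_smul, inv_mul_cancel₀ hc, one_smul]
            rw [h5]
            apply Submodule.smul_mem
            apply sub_mem (Submodule.mem_sup_left hcd)
            exact Submodule.mem_sup_right (Submodule.smul_mem _ _ (subset_span rfl))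
          refine ⟨hc, ?_⟩
          by_contra hd
          apply ha₂P
          rw [hc, zero_smul, zero_add] at hcd
          have h5 : a₂ = d⁻¹ • (d • a₂) := by rw [smul_smul, inv_mul_cancel₀ hd, one_smul]
          rw [h5]; exact P.smul_mem _ hcd
      obtain ⟨a₁, a₂, hu1, hu2, ha₁P, ha₂P, hind⟩ := big
      have hK3 : ∀ a : V, (u a - l3 • a ∈ P) → ∀ c d : F, a = c • a₁ + d • a₂ → a = 0 := by
        intro a ha c d hacd
        have h4 : (-(l3 * c)) • a₁ + ((1 - l3) * d) • a₂ ∈ P := by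
          have e : (-(l3 * c)) • a₁ + ((1 - l3) * d) • a₂ =
              (u a - l3 • a) - c • (u a₁) - d • (u a₂ - a₂) := by
            rw [hacd, map_add, map_smul, map_smul]; module
          rw [e]
          exact sub_mem (sub_mem ha (P.smul_mem _ hu1)) (P.smul_mem _ hu2)
        obtain ⟨h5, h6⟩ := hind _ _ h4
        have hcz : c = 0 := by
          rcases mul_eq_zero.mp (neg_eq_zero.mp h5) with h | h
          · exact absurd h hl30
          · exact h
        have hdz : d = 0 := by
          rcases mul_eq_zero.mp h6 with h | h
          · exact absurd (by linear_combination -h) hl31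
          · exact h
        rw [hacd, hcz, hdz, zero_smul, zero_smul, add_zero]
      obtain ⟨a₃, ha₃K, ha₃0⟩ : ∃ a₃, (u a₃ - l3 • a₃ ∈ P) ∧ a₃ ≠ 0 := by
        have h9 := hKrank l3
        have hne : LinearMap.ker (P.mkQ ∘ₗ (u - l3 • LinearMap.id)) ≠ ⊥ := by
          intro h
          rw [h, finrank_bot] at h9
          omega
        obtain ⟨a, haK, ha0⟩ := Submodule.exists_mem_ne_zero_of_ne_bot hne
        exact ⟨a, (hKmem l3 a).mp haK, ha0⟩
      have ha3span : ∀ c d : F, a₃ ≠ c • a₁ + d • a₂ := by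
        intro c d h
        exact ha₃0 (hK3 a₃ ha₃K c d h)
      by_cases hPW : ∀ c1 c2 c3 : F, c1 • a₁ + c2 • a₂ + c3 • a₃ ∈ P →
          c1 = 0 ∧ c2 = 0 ∧ c3 = 0
      · have li4 : LinearIndependent F ![a₁, a₂, a₃, y] := by
          rw [Fintype.linearIndependent_iff]
          intro g hg
          rw [Fin.sum_univ_four] at hg
          simp only [Matrix.cons_val_zero, Matrix.cons_val_one, Matrix.head_cons,
            Matrix.cons_val_two, Matrix.tail_cons, Matrix.cons_val_three] at hg
          have hgP : g 0 • a₁ + g 1 • a₂ + g 2 • a₃ ∈ P := by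
            have e : g 0 • a₁ + g 1 • a₂ + g 2 • a₃ = (-(g 3)) • y := by
              linear_combination (norm := module) hg
            rw [e]; exact P.smul_mem _ hyP
          obtain ⟨e1, e2, e3⟩ := hPW _ _ _ hgP
          have hg3 : g 3 • y = 0 := by
            rw [e1, e2, e3] at hg
            simpa using hg
          have hg3' : g 3 = 0 := by
            rcases smul_eq_zero.mp hg3 with h | h
            exacts [h, absurd h hy0]
          intro i; fin_cases i
          · exact e1
          · exact e2
          · exact e3
          · exact hg3'
        exact case2tail P S hall hspec u hu a₁ a₂ a₃ l3 hl30 hl31 hu1 hu2 ha₃K ha₁P ha₂P ha₃0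
          x y hx hyP (le_of_eq hspanxy.symm) li4 lixy
      · push_neg at hPW
        obtain ⟨c1, c2, c3, hcP, hc123⟩ := hPW
        have hc3 : c3 ≠ 0 := by
          intro h
          rw [h, zero_smul, add_zero] at hcP
          obtain ⟨e1, e2⟩ := hind _ _ hcP
          exact hc123 e1 e2 h
        have hpP : (c3⁻¹ * c1) • a₁ + (c3⁻¹ * c2) • a₂ + a₃ ∈ P := by
          have e : (c3⁻¹ * c1) • a₁ + (c3⁻¹ * c2) • a₂ + a₃ =
              c3⁻¹ • (c1 • a₁ + c2 • a₂ + c3 • a₃) := by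
            rw [smul_add, smul_add, smul_smul, smul_smul, smul_smul, inv_mul_cancel₀ hc3,
              one_smul]
          rw [e]; exact P.smul_mem _ hcP
        have hp0 : (c3⁻¹ * c1) • a₁ + (c3⁻¹ * c2) • a₂ + a₃ ≠ 0 := by
          intro h
          apply ha3span (-(c3⁻¹ * c1)) (-(c3⁻¹ * c2))
          linear_combination (norm := module) h
        obtain ⟨x', hx'P, hx'p⟩ :
            ∃ x' ∈ P, x' ∉ span F {(c3⁻¹ * c1) • a₁ + (c3⁻¹ * c2) • a₂ + a₃} := by
          by_contra hcon
          push_neg at hcon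
          have h4 := Submodule.finrank_mono
            (show P ≤ span F {(c3⁻¹ * c1) • a₁ + (c3⁻¹ * c2) • a₂ + a₃} from hcon)
          rw [hP, finrank_span_singleton hp0] at h4
          omega
        have hx'0 : x' ≠ 0 := fun h => hx'p (h ▸ Submodule.zero_mem _)
        have lipx' : LinearIndependent F ![(c3⁻¹ * c1) • a₁ + (c3⁻¹ * c2) • a₂ + a₃, x'] := by
          rw [LinearIndependent.pair_iff]
          intro s t hst
          rcases eq_or_ne t 0 with rfl | htt
          · refine ⟨?_, rfl⟩
            rw [zero_smul, add_zero, smul_eq_zero] at hst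
            exact hst.resolve_right hp0
          · exfalso
            apply hx'p
            rw [Submodule.mem_span_singleton]
            refine ⟨t⁻¹ * -s, ?_⟩
            have h' : t • x' = -s • ((c3⁻¹ * c1) • a₁ + (c3⁻¹ * c2) • a₂ + a₃) := by
              linear_combination (norm := module) hst
            rw [mul_smul, ← h', smul_smul, inv_mul_cancel₀ htt, one_smul]
        have hrangepx : Set.range ![(c3⁻¹ * c1) • a₁ + (c3⁻¹ * c2) • a₂ + a₃, x'] =
            {(c3⁻¹ * c1) • a₁ + (c3⁻¹ * c2) • a₂ + a₃, x'} := by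
          simp [Matrix.range_cons]
          rw [Set.pair_comm]
        have hspanpx : span F {(c3⁻¹ * c1) • a₁ + (c3⁻¹ * c2) • a₂ + a₃, x'} = P := by
          apply Submodule.eq_of_le_of_finrank_le
          · rw [span_le]; rintro v (rfl | rfl)
            exacts [hpP, hx'P]
          · rw [hP, ← hrangepx, finrank_span_eq_card lipx']
            simp
        have li4 : LinearIndependent F ![a₁, a₂, a₃, x'] := by
          rw [Fintype.linearIndependent_iff]
          intro g hg
          rw [Fin.sum_univ_four] at hg
          simp only [Matrix.cons_val_zero, Matrix.cons_val_one, Matrix.head_cons,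
            Matrix.cons_val_two, Matrix.tail_cons, Matrix.cons_val_three] at hg
          have hkey : (g 0 - g 2 * (c3⁻¹ * c1)) • a₁ + (g 1 - g 2 * (c3⁻¹ * c2)) • a₂ ∈ P := by
            have e : (g 0 - g 2 * (c3⁻¹ * c1)) • a₁ + (g 1 - g 2 * (c3⁻¹ * c2)) • a₂ =
                (-(g 3)) • x' - g 2 • ((c3⁻¹ * c1) • a₁ + (c3⁻¹ * c2) • a₂ + a₃) := by
              linear_combination (norm := module) hg
            rw [e]
            exact sub_mem (P.smul_mem _ hx'P) (P.smul_mem _ hpP)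
          obtain ⟨e1', e2'⟩ := hind _ _ hkey
          have hg2 : g 2 • ((c3⁻¹ * c1) • a₁ + (c3⁻¹ * c2) • a₂ + a₃) + g 3 • x' = 0 := by
            linear_combination (norm := module) hg - e1' • a₁ - e2' • a₂
          obtain ⟨hg2', hg3'⟩ := LinearIndependent.pair_iff.mp lipx' _ _ hg2
          have hg0 : g 0 = 0 := by linear_combination e1' + (c3⁻¹ * c1) * hg2'
          have hg1 : g 1 = 0 := by linear_combination e2' + (c3⁻¹ * c2) * hg2'
          intro i; fin_cases i
          · exact hg0
          · exact hg1
          · exact hg2'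
          · exact hg3'
        exact case2tail P S hall hspec u hu a₁ a₂ a₃ l3 hl30 hl31 hu1 hu2 ha₃K ha₁P ha₂P ha₃0
          _ x' hpP hx'P (le_of_eq hspanpx.symm) li4 lipx'
  · -- characteristic ≠ 2
    have hmem := memS P S hall hx hyP f00 f01 f10 f11 (f 0) (-(f 1))
      (by simp [f00, f11])
    apply no_three S hspec hmem (a₁ := x) (a₂ := y) (a₃ := u x)
      (l₁ := 1) (l₂ := -1) (l₃ := 0) hx0 hy0 hz0
    · simp [LinearMap.add_apply, LinearMap.smulRight_apply, f00, f10]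
    · simp [LinearMap.add_apply, LinearMap.smulRight_apply, f01, f11]
    · simp [LinearMap.add_apply, LinearMap.smulRight_apply, f02, f12]
    · intro h; exact h2 (by linear_combination h)
    · exact one_ne_zero
    · intro h; exact one_ne_zero (neg_eq_zero.mp h)
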